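/- Let K be a perfectoid analytic field. Then the norm groups of K and of its tilt K' coincide: |K^×| = |(K')^×|. -/

import Mathlib

open scoped NNReal

set_option synthInstance.maxHeartbeats 1000000
set_option maxHeartbeats 1000000

/-- The valuation ring `o_K` of an analytic field `K` (a field complete with respect to a
multiplicative nonarchimedean norm, given by a rank-one valuation). -/
noncomputable abbrev OK (K : Type*) [Field K] [Valued K ℝ≥0] : Subring K :=
  Valued.v.integer

/-- `o_K/(p)`. -/
abbrev OKmodp (p : ℕ) (K : Type*) [Field K] [Valued K ℝ≥0] : Type _ :=
  OK K ⧸ Ideal.span {(p : OK K)}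

/-- `K` is discretely valued: the norm group is generated by a single `γ < 1`. -/
def IsDiscretelyValued (K : Type*) [Field K] [Valued K ℝ≥0] : Prop :=
  ∃ γ : ℝ≥0, γ < 1 ∧ ∀ x : K, x ≠ 0 → ∃ n : ℤ, Valued.v x = γ ^ n

theorem charP_OKmodp (p : ℕ) [Fact p.Prime] (K : Type*) [Field K] [Valued K ℝ≥0]
    (hp : Valued.v (p : K) = (p : ℝ≥0)⁻¹) : CharP (OKmodp p K) p := by
  refine CharP.quotient _ p ?_
  intro hu
  rcases isUnit_iff_exists_inv.mp hu with ⟨u, huu⟩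
  have hcast : (((p : OK K) * u : OK K) : K) = (1 : K) := by rw [huu]; rfl
  have hple : ((p : OK K) : K) = (p : K) := by push_cast; ring
  have hu1 : Valued.v ((u : K)) ≤ 1 := u.2
  have h1 : Valued.v ((p : K)) * Valued.v ((u : K)) = 1 := by
    rw [← hple, ← Valued.v.map_mul]
    rw [show ((p : OK K) : K) * ((u : K)) = (((p : OK K) * u : OK K) : K) from rfl, hcast]
    exact Valued.v.map_one
  rw [hp] at h1
  have hp1 : ((p : ℝ≥0))⁻¹ < 1 := by
    have h2 : (1 : ℝ≥0) < (p : ℝ≥0) := by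
      exact_mod_cast Nat.one_lt_cast.mpr (Fact.out : p.Prime).one_lt
    exact inv_lt_one_of_one_lt₀ h2
  have : (p : ℝ≥0)⁻¹ * Valued.v ((u : K)) ≤ (p : ℝ≥0)⁻¹ * 1 := by
    exact mul_le_mul_of_nonneg_left hu1 zero_le
  rw [h1] at this
  simp at this
  exact absurd (lt_of_le_of_lt this hp1) (lt_irrefl _)

/-- The tilt `o_{K'} = lim← o_K/(p)` (inverse limit under Frobenius), realized as a subring
of the product ring `Π_n o_K/(p)`. -/
noncomputable def TiltRing (p : ℕ) [Fact p.Prime] (K : Type*) [Field K] [Valued K ℝ≥0]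
    (hp : Valued.v (p : K) = (p : ℝ≥0)⁻¹) : Subring (∀ _ : ℕ, OKmodp p K) where
  carrier := {x | ∀ n, x (n + 1) ^ p = x n}
  zero_mem' := by
    intro n
    simp only [Pi.zero_apply]
    exact zero_pow (Fact.out : p.Prime).ne_zero
  one_mem' := by intro n; simp
  add_mem' := by
    haveI := charP_OKmodp p K hp
    intro a b ha hb n
    simp only [Pi.add_apply]
    rw [add_pow_char, ha n, hb n]
  mul_mem' := by
    intro a b ha hb n
    simp only [Pi.mul_apply]
    rw [mul_pow, ha n, hb n]
  neg_mem' := by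
    haveI := charP_OKmodp p K hp
    intro a ha n
    simp only [Pi.neg_apply]
    rw [show (-(a (n+1))) = (-1) * a (n+1) by ring, mul_pow, neg_one_pow_char, ha n]
    ring

/-- The defining property of the tilt norm `|x̄|' = |θ(x̄)|`: it vanishes at `0`, and
for `x̄ = (x̄_n)_n` in the tilt, `|x̄|' = |x_n|^(p^n)` for any lift `x_n ∈ o_K` of the
`n`-th component `x̄_n` whose norm exceeds `|p| = p⁻¹`. -/
def IsTiltNorm (p : ℕ) [Fact p.Prime] (K : Type*) [Field K] [Valued K ℝ≥0]
    (hp : Valued.v (p : K) = (p : ℝ≥0)⁻¹)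
    (N : TiltRing p K hp → ℝ≥0) : Prop :=
  N 0 = 0 ∧
  ∀ (x : TiltRing p K hp) (n : ℕ) (xn : OK K),
    Ideal.Quotient.mk (Ideal.span {(p : OK K)}) xn = x.val n →
    (p : ℝ≥0)⁻¹ < Valued.v (xn : K) →
    N x = Valued.v (xn : K) ^ (p ^ n)

section PerfAux

variable {p : ℕ} [Fact p.Prime] {K : Type*} [Field K] [Valued K ℝ≥0]

lemma one_lt_pnn (p : ℕ) [Fact p.Prime] : 1 < (p : ℝ≥0) := by
  exact_mod_cast (Fact.out : p.Prime).one_lt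

lemma pinv_lt_one (p : ℕ) [Fact p.Prime] : (p : ℝ≥0)⁻¹ < 1 :=
  inv_lt_one_of_one_lt₀ (one_lt_pnn p)

lemma pinv_pos (p : ℕ) [Fact p.Prime] : 0 < (p : ℝ≥0)⁻¹ :=
  inv_pos.mpr (lt_trans zero_lt_one (one_lt_pnn p))

lemma pK_ne_zero (hp : Valued.v (p : K) = (p : ℝ≥0)⁻¹) : (p : K) ≠ 0 := by
  intro h
  rw [h, map_zero] at hp
  exact (pinv_pos p).ne' hp.symm

lemma mk_eq_zero_iff (hp : Valued.v (p : K) = (p : ℝ≥0)⁻¹) (x : OK K) :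
    Ideal.Quotient.mk (Ideal.span {(p : OK K)}) x = 0 ↔ Valued.v (x : K) ≤ (p : ℝ≥0)⁻¹ := by
  rw [Ideal.Quotient.eq_zero_iff_mem, Ideal.mem_span_singleton]
  constructor
  · rintro ⟨c, rfl⟩
    have h1 : (((p : OK K) * c : OK K) : K) = (p : K) * (c : K) := by push_cast; ring
    rw [show Valued.v (((p : OK K) * c : OK K) : K) = Valued.v ((p : K) * (c : K)) by rw [h1],
      map_mul, hp]
    calc (p : ℝ≥0)⁻¹ * Valued.v ((c : K)) ≤ (p : ℝ≥0)⁻¹ * 1 := mul_le_mul_right c.2 _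
      _ = (p : ℝ≥0)⁻¹ := mul_one _
  · intro h
    have hpK : (p : K) ≠ 0 := pK_ne_zero hp
    have hmem : Valued.v ((x : K) / (p : K)) ≤ 1 := by
      rw [map_div₀, hp]
      exact (div_le_one (pinv_pos p)).mpr h
    refine ⟨⟨(x : K) / (p : K), hmem⟩, ?_⟩
    apply Subtype.ext
    have hple : (((p : OK K) : K)) = (p : K) := by push_cast; ring
    show (x : K) = (((p : OK K) * ⟨(x : K) / (p : K), hmem⟩ : OK K) : K)
    rw [show (((p : OK K) * (⟨(x : K) / (p : K), hmem⟩ : OK K) : OK K) : K)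
        = ((p : OK K) : K) * ((x : K) / (p : K)) from rfl, hple]
    field_simp

lemma N_spec (hp : Valued.v (p : K) = (p : ℝ≥0)⁻¹) {N : TiltRing p K hp → ℝ≥0}
    (hN : IsTiltNorm p K hp N) (a : TiltRing p K hp) (n : ℕ) (hn : a.val n ≠ 0) :
    ∃ x : OK K, Ideal.Quotient.mk (Ideal.span {(p : OK K)}) x = a.val n ∧
      (p : ℝ≥0)⁻¹ < Valued.v (x : K) ∧ N a = Valued.v (x : K) ^ (p ^ n) := by
  obtain ⟨x, hx⟩ := Ideal.Quotient.mk_surjective (a.val n)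
  have hv : (p : ℝ≥0)⁻¹ < Valued.v ((x : K)) := by
    by_contra hle
    have h0 := (mk_eq_zero_iff hp x).mpr (not_lt.mp hle)
    rw [hx] at h0
    exact hn h0
  exact ⟨x, hx, hv, hN.2 a n x hx hv⟩

lemma val_step (hp : Valued.v (p : K) = (p : ℝ≥0)⁻¹) (a : TiltRing p K hp) (n : ℕ) :
    a.val (n + 1) ^ p = a.val n := a.2 n

lemma val_pow (hp : Valued.v (p : K) = (p : ℝ≥0)⁻¹) (a : TiltRing p K hp) (m k : ℕ) :
    a.val (m + k) ^ p ^ k = a.val m := by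
  induction k with
  | zero => simp
  | succ k ih =>
    have h1 : a.val (m + (k + 1)) ^ p ^ (k + 1) = (a.val (m + k + 1) ^ p) ^ p ^ k := by
      rw [← pow_mul]
      congr 1
      exact pow_succ' p k
    rw [h1, val_step hp, ih]

lemma val_ne_zero_of_ge (hp : Valued.v (p : K) = (p : ℝ≥0)⁻¹) (a : TiltRing p K hp)
    {m n : ℕ} (h : m ≤ n) (hm : a.val m ≠ 0) : a.val n ≠ 0 := by
  obtain ⟨k, rfl⟩ := Nat.exists_eq_add_of_le h
  intro h0
  apply hm
  rw [← val_pow hp a m k, h0, zero_pow (pow_ne_zero _ (Fact.out : p.Prime).ne_zero)]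

lemma exists_val_ne_zero (hp : Valued.v (p : K) = (p : ℝ≥0)⁻¹) {a : TiltRing p K hp}
    (ha : a ≠ 0) : ∃ n, a.val n ≠ 0 := by
  by_contra h
  push_neg at h
  exact ha (Subtype.ext (funext fun n => h n))

lemma N_ne_zero (hp : Valued.v (p : K) = (p : ℝ≥0)⁻¹) {N : TiltRing p K hp → ℝ≥0}
    (hN : IsTiltNorm p K hp N) {a : TiltRing p K hp} (ha : a ≠ 0) : N a ≠ 0 := by
  obtain ⟨n, hn⟩ := exists_val_ne_zero hp ha
  obtain ⟨x, -, hv, hNa⟩ := N_spec hp hN a n hn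
  rw [hNa]
  exact pow_ne_zero _ (lt_trans (pinv_pos p) hv).ne'

end PerfAux

section PerfAux2

variable {p : ℕ} [Fact p.Prime] {K : Type*} [Field K] [Valued K ℝ≥0]

lemma exists_tilt (hp : Valued.v (p : K) = (p : ℝ≥0)⁻¹) {N : TiltRing p K hp → ℝ≥0}
    (hN : IsTiltNorm p K hp N) (hfrob : ∀ a : OKmodp p K, ∃ b, b ^ p = a)
    (x : OK K) (hx : (p : ℝ≥0)⁻¹ < Valued.v (x : K)) :
    ∃ a : TiltRing p K hp, a ≠ 0 ∧ N a = Valued.v (x : K) := by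
  let b : ℕ → OKmodp p K := fun k =>
    Nat.rec (Ideal.Quotient.mk (Ideal.span {(p : OK K)}) x)
      (fun _ prev => Classical.choose (hfrob prev)) k
  have hb : ∀ k, b (k + 1) ^ p = b k := fun k => Classical.choose_spec (hfrob (b k))
  have hmem : b ∈ TiltRing p K hp := hb
  refine ⟨⟨b, hmem⟩, ?_, ?_⟩
  · intro h0
    have h1 : b 0 = 0 := congrFun (congrArg Subtype.val h0) 0
    have h2 : Ideal.Quotient.mk (Ideal.span {(p : OK K)}) x = 0 := h1
    rw [mk_eq_zero_iff hp] at h2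
    exact absurd hx (not_lt.mpr h2)
  · have h2 := hN.2 ⟨b, hmem⟩ 0 x rfl hx
    simpa using h2

lemma N_one (hp : Valued.v (p : K) = (p : ℝ≥0)⁻¹) {N : TiltRing p K hp → ℝ≥0}
    (hN : IsTiltNorm p K hp N) : N 1 = 1 := by
  have hv : (p : ℝ≥0)⁻¹ < Valued.v ((1 : OK K) : K) := by
    rw [OneMemClass.coe_one, map_one]
    exact pinv_lt_one p
  have h1 : Ideal.Quotient.mk (Ideal.span {(p : OK K)}) (1 : OK K)
      = ((1 : TiltRing p K hp)).val 0 := by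
    rw [map_one]; rfl
  have h2 := hN.2 1 0 1 h1 hv
  rw [OneMemClass.coe_one, map_one] at h2
  simpa using h2

lemma tilt_one_ne_zero (hp : Valued.v (p : K) = (p : ℝ≥0)⁻¹) {N : TiltRing p K hp → ℝ≥0}
    (hN : IsTiltNorm p K hp N) : (1 : TiltRing p K hp) ≠ 0 := by
  intro h
  have : (1 : ℝ≥0) = 0 := by rw [← N_one hp hN, h, hN.1]
  exact one_ne_zero this

lemma N_mul (hp : Valued.v (p : K) = (p : ℝ≥0)⁻¹) {N : TiltRing p K hp → ℝ≥0}
    (hN : IsTiltNorm p K hp N) {a b : TiltRing p K hp} (ha : a ≠ 0) (hb : b ≠ 0) :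
    N (a * b) = N a * N b := by
  obtain ⟨na, hna⟩ := exists_val_ne_zero hp ha
  obtain ⟨nb, hnb⟩ := exists_val_ne_zero hp hb
  have hpos : 0 < N a * N b :=
    pos_iff_ne_zero.mpr (mul_ne_zero (N_ne_zero hp hN ha) (N_ne_zero hp hN hb))
  obtain ⟨m, hm⟩ := exists_pow_lt_of_lt_one hpos (pinv_lt_one p)
  set n := max (max na nb) m with hn
  have h1 : a.val n ≠ 0 :=
    val_ne_zero_of_ge hp a (le_trans (le_max_left na nb) (le_max_left _ m)) hna
  have h2 : b.val n ≠ 0 :=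
    val_ne_zero_of_ge hp b (le_trans (le_max_right na nb) (le_max_left _ m)) hnb
  obtain ⟨xa, hxa, hva, hNa⟩ := N_spec hp hN a n h1
  obtain ⟨xb, hxb, hvb, hNb⟩ := N_spec hp hN b n h2
  have hmn : m ≤ p ^ n :=
    le_trans (le_max_right _ m) (Nat.le_of_lt (Nat.lt_pow_self (n := n) (Fact.out : p.Prime).one_lt))
  have hlt : ((p : ℝ≥0)⁻¹) ^ (p ^ n) < N a * N b :=
    lt_of_le_of_lt (pow_le_pow_of_le_one zero_le (le_of_lt (pinv_lt_one p)) hmn) hm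
  have key : (p : ℝ≥0)⁻¹ < Valued.v ((xa : K)) * Valued.v ((xb : K)) := by
    by_contra hle
    push_neg at hle
    have hle2 : N a * N b ≤ ((p : ℝ≥0)⁻¹) ^ (p ^ n) := by
      rw [hNa, hNb, ← mul_pow]
      exact pow_le_pow_left₀ zero_le hle _
    exact absurd (lt_of_lt_of_le hlt hle2) (lt_irrefl _)
  have hlift : Ideal.Quotient.mk (Ideal.span {(p : OK K)}) (xa * xb) = (a * b).val n := by
    rw [map_mul, hxa, hxb]; rfl
  have hv : (p : ℝ≥0)⁻¹ < Valued.v ((xa * xb : OK K) : K) := by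
    rw [show ((xa * xb : OK K) : K) = (xa : K) * (xb : K) from rfl, map_mul]
    exact key
  have h3 := hN.2 (a * b) n (xa * xb) hlift hv
  rw [h3, show ((xa * xb : OK K) : K) = (xa : K) * (xb : K) from rfl, map_mul, mul_pow,
    ← hNa, ← hNb]

lemma N_pow (hp : Valued.v (p : K) = (p : ℝ≥0)⁻¹) {N : TiltRing p K hp → ℝ≥0}
    (hN : IsTiltNorm p K hp N) {c : TiltRing p K hp} (hc : c ≠ 0) (m : ℕ) :
    c ^ m ≠ 0 ∧ N (c ^ m) = (N c) ^ m := by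
  induction m with
  | zero =>
    refine ⟨by simpa using tilt_one_ne_zero hp hN, by simpa using N_one hp hN⟩
  | succ m ih =>
    obtain ⟨h1, h2⟩ := ih
    have h3 : N (c ^ (m + 1)) = N (c ^ m) * N c := by
      rw [pow_succ]
      exact N_mul hp hN h1 hc
    have h4 : N (c ^ (m + 1)) = (N c) ^ (m + 1) := by
      rw [h3, h2, pow_succ]
    refine ⟨?_, h4⟩
    intro h0
    have h5 : (N c) ^ (m + 1) = 0 := by rw [← h4, h0, hN.1]
    exact pow_ne_zero _ (N_ne_zero hp hN hc) h5

lemma exists_val_between (hp : Valued.v (p : K) = (p : ℝ≥0)⁻¹) (hnd : ¬ IsDiscretelyValued K) :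
    ∃ t : K, (p : ℝ≥0)⁻¹ < Valued.v t ∧ Valued.v t < 1 := by
  by_contra h
  push_neg at h
  apply hnd
  refine ⟨(p : ℝ≥0)⁻¹, pinv_lt_one p, fun x hx => ?_⟩
  have hr : 0 < Valued.v x := pos_iff_ne_zero.mpr ((Valuation.ne_zero_iff _).mpr hx)
  obtain ⟨n, hn1, hn2⟩ := exists_mem_Ioc_zpow hr (one_lt_pnn p)
  have hppos : (0 : ℝ≥0) < (p : ℝ≥0) := lt_trans zero_lt_one (one_lt_pnn p)
  have hzpos : (0 : ℝ≥0) < (p : ℝ≥0) ^ (n + 1) := zpow_pos hppos _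
  have hvy : Valued.v (x * (p : K) ^ (n + 1)) = Valued.v x / (p : ℝ≥0) ^ (n + 1) := by
    rw [map_mul, map_zpow₀, hp, inv_zpow, div_eq_mul_inv]
  have hylt : (p : ℝ≥0)⁻¹ < Valued.v (x * (p : K) ^ (n + 1)) := by
    rw [hvy, lt_div_iff₀ hzpos]
    calc (p : ℝ≥0)⁻¹ * (p : ℝ≥0) ^ (n + 1) = (p : ℝ≥0) ^ (-1 + (n + 1)) := by
          rw [← zpow_neg_one, ← zpow_add₀ hppos.ne']
      _ = (p : ℝ≥0) ^ n := by norm_num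
      _ < Valued.v x := hn1
  have hyle : Valued.v (x * (p : K) ^ (n + 1)) ≤ 1 := by
    rw [hvy, div_le_one hzpos]
    exact hn2
  have hy1 : Valued.v (x * (p : K) ^ (n + 1)) = 1 :=
    le_antisymm hyle (h _ hylt)
  rw [hvy, div_eq_one_iff_eq hzpos.ne'] at hy1
  refine ⟨-(n + 1), ?_⟩
  rw [hy1, inv_zpow, ← zpow_neg, neg_neg]

lemma exists_tilt_of_le_one (hp : Valued.v (p : K) = (p : ℝ≥0)⁻¹)
    {N : TiltRing p K hp → ℝ≥0} (hN : IsTiltNorm p K hp N)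
    (hnd : ¬ IsDiscretelyValued K) (hfrob : ∀ a : OKmodp p K, ∃ b, b ^ p = a)
    (x : K) (hx : x ≠ 0) (hx1 : Valued.v x ≤ 1) :
    ∃ d : TiltRing p K hp, d ≠ 0 ∧ N d = Valued.v x := by
  obtain ⟨t, ht1, ht2⟩ := exists_val_between hp hnd
  have hvt_pos : 0 < Valued.v t := lt_trans (pinv_pos p) ht1
  obtain ⟨c, hc0, hNc⟩ := exists_tilt hp hN hfrob ⟨t, le_of_lt ht2⟩ ht1
  have hvx_pos : 0 < Valued.v x := pos_iff_ne_zero.mpr ((Valuation.ne_zero_iff _).mpr hx)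
  have hinv : 1 < (Valued.v t)⁻¹ := (one_lt_inv₀ hvt_pos).mpr ht2
  have hex : ∃ m : ℕ, (p : ℝ≥0)⁻¹ < Valued.v x * ((Valued.v t)⁻¹) ^ m := by
    obtain ⟨m, hm⟩ := pow_unbounded_of_one_lt ((p : ℝ≥0)⁻¹ / Valued.v x) hinv
    refine ⟨m, ?_⟩
    rw [div_lt_iff₀ hvx_pos] at hm
    calc (p : ℝ≥0)⁻¹ < (Valued.v t)⁻¹ ^ m * Valued.v x := hm
      _ = Valued.v x * ((Valued.v t)⁻¹) ^ m := mul_comm _ _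
  obtain ⟨m, hs1, hs2⟩ : ∃ m : ℕ, ((p : ℝ≥0)⁻¹ < Valued.v x * ((Valued.v t)⁻¹) ^ m)
      ∧ Valued.v x * ((Valued.v t)⁻¹) ^ m ≤ 1 := by
    refine ⟨Nat.find hex, Nat.find_spec hex, ?_⟩
    rcases Nat.eq_zero_or_pos (Nat.find hex) with h0 | h0
    · rw [h0]; simpa using hx1
    · have hprev := Nat.find_min hex (Nat.sub_lt h0 one_pos)
      push_neg at hprev
      have hrw : Nat.find hex = (Nat.find hex - 1) + 1 := by omega
      rw [hrw, pow_succ, ← mul_assoc]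
      have h6 : (Valued.v x * ((Valued.v t)⁻¹) ^ (Nat.find hex - 1)) * (Valued.v t)⁻¹
          ≤ (p : ℝ≥0)⁻¹ * (Valued.v t)⁻¹ := mul_le_mul_left hprev _
      refine le_trans h6 (le_of_lt ?_)
      rw [← mul_inv]
      refine inv_lt_one_of_one_lt₀ ?_
      calc (1 : ℝ≥0) = (p : ℝ≥0) * (p : ℝ≥0)⁻¹ := by
            rw [mul_inv_cancel₀ (lt_trans zero_lt_one (one_lt_pnn p)).ne']
        _ < (p : ℝ≥0) * Valued.v t := by
            exact mul_lt_mul_of_pos_left ht1 (lt_trans zero_lt_one (one_lt_pnn p))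
  have hvy : Valued.v (x * t⁻¹ ^ m) = Valued.v x * ((Valued.v t)⁻¹) ^ m := by
    rw [map_mul, map_pow, map_inv₀]
  have hy1 : Valued.v (x * t⁻¹ ^ m) ≤ 1 := by rw [hvy]; exact hs2
  have hy2 : (p : ℝ≥0)⁻¹ < Valued.v (((⟨x * t⁻¹ ^ m, hy1⟩ : OK K) : K)) := by
    show (p : ℝ≥0)⁻¹ < Valued.v (x * t⁻¹ ^ m)
    rw [hvy]; exact hs1
  obtain ⟨a, ha0, hNa⟩ := exists_tilt hp hN hfrob ⟨x * t⁻¹ ^ m, hy1⟩ hy2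
  obtain ⟨hcm0, hNcm⟩ := N_pow hp hN hc0 m
  have hNa' : N a = Valued.v x * ((Valued.v t)⁻¹) ^ m := by
    rw [hNa]
    show Valued.v (x * t⁻¹ ^ m) = _
    exact hvy
  have hNc' : N c = Valued.v t := hNc
  have hNd : N (a * c ^ m) = Valued.v x := by
    rw [N_mul hp hN ha0 hcm0, hNa', hNcm, hNc']
    rw [mul_assoc, ← mul_pow, inv_mul_cancel₀ hvt_pos.ne', one_pow, mul_one]
  refine ⟨a * c ^ m, ?_, hNd⟩
  intro h0
  rw [h0, hN.1] at hNd
  exact hvx_pos.ne' hNd.symm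

end PerfAux2

/-- For a perfectoid analytic field `K`, the norm groups of `K` and of its tilt `K'`
coincide: `|Kˣ| = |(K')ˣ|` (the latter being generated by the norms of nonzero elements
of `o_{K'}`, since `K'` is the fraction field of `o_{K'}`). -/
theorem perfectoid_norm_groups_eq (p : ℕ) [Fact p.Prime] (K : Type*) [Field K]
    [Valued K ℝ≥0] [CompleteSpace K]
    (hp : Valued.v (p : K) = (p : ℝ≥0)⁻¹)
    (hnd : ¬ IsDiscretelyValued K)
    (hfrob : ∀ a : OKmodp p K, ∃ b, b ^ p = a)
    (N : TiltRing p K hp → ℝ≥0) (hN : IsTiltNorm p K hp N) :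
    {r : ℝ≥0 | ∃ x : K, x ≠ 0 ∧ Valued.v x = r} =
      {r : ℝ≥0 | ∃ a b : TiltRing p K hp, a ≠ 0 ∧ b ≠ 0 ∧ r = N a / N b} := by
  ext r
  simp only [Set.mem_setOf_eq]
  constructor
  · rintro ⟨x, hx, rfl⟩
    rcases le_or_gt (Valued.v x) 1 with h1 | h1
    · obtain ⟨d, hd0, hNd⟩ := exists_tilt_of_le_one hp hN hnd hfrob x hx h1
      exact ⟨d, 1, hd0, tilt_one_ne_zero hp hN, by rw [N_one hp hN, div_one, hNd]⟩
    · have hx' : x⁻¹ ≠ 0 := inv_ne_zero hx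
      have h2 : Valued.v (x⁻¹) ≤ 1 := by
        rw [map_inv₀]
        exact inv_le_one_of_one_le₀ (le_of_lt h1)
      obtain ⟨d, hd0, hNd⟩ := exists_tilt_of_le_one hp hN hnd hfrob x⁻¹ hx' h2
      refine ⟨1, d, tilt_one_ne_zero hp hN, hd0, ?_⟩
      rw [N_one hp hN, hNd, map_inv₀, one_div, inv_inv]
  · rintro ⟨a, b, ha, hb, rfl⟩
    obtain ⟨na, hna⟩ := exists_val_ne_zero hp ha
    obtain ⟨nb, hnb⟩ := exists_val_ne_zero hp hb
    obtain ⟨xa, -, hva, hNa⟩ := N_spec hp hN a na hna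
    obtain ⟨xb, -, hvb, hNb⟩ := N_spec hp hN b nb hnb
    have hxa : ((xa : K)) ≠ 0 := (Valuation.ne_zero_iff _).mp (lt_trans (pinv_pos p) hva).ne'
    have hxb : ((xb : K)) ≠ 0 := (Valuation.ne_zero_iff _).mp (lt_trans (pinv_pos p) hvb).ne'
    refine ⟨(xa : K) ^ (p ^ na) / (xb : K) ^ (p ^ nb),
      div_ne_zero (pow_ne_zero _ hxa) (pow_ne_zero _ hxb), ?_⟩
    rw [map_div₀, map_pow, map_pow, hNa, hNb]
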